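/- Let F_1, F_2 be continuously differentiable cumulative distribution functions on ℝ with densities F_1', F_2', and let (x_1,x_2) have joint density F_1'(x_1)F_2'(x_2)(1 + θ(1−2F_1(x_1))(1−2F_2(x_2))) with −1 ≤ θ ≤ 1, where x_2 is integrable and ∫ y(1−2F_2(y))F_2'(y) dy is finite. Then E[x_2 | x_1] = E[x_2] + θ(1 − 2F_1(x_1)) ∫_ℝ y(1 − 2F_2(y)) F_2'(y) dy almost surely. -/

import Mathlib

open MeasureTheory ProbabilityTheory Filter
section FgmHelpers
open Set

lemma mono_deriv_nonneg {F : ℝ → ℝ} (hd : Differentiable ℝ F) (hm : Monotone F) (x : ℝ) :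
    0 ≤ deriv F x := by
  have h := (hd x).hasDerivAt
  rw [hasDerivAt_iff_tendsto_slope] at h
  refine ge_of_tendsto h ?_
  filter_upwards [self_mem_nhdsWithin] with y hy
  rcases lt_or_gt_of_ne (Ne.symm hy) with h' | h'
  · rw [slope_def_field]
    exact div_nonneg (by simpa using hm h'.le) (by linarith)
  · rw [slope_def_field]
    exact div_nonneg_iff.mpr (Or.inr ⟨by simpa using hm h'.le, by linarith⟩)

lemma mono_cdf_mem {F : ℝ → ℝ} (hm : Monotone F)
    (hbot : Tendsto F atBot (nhds 0)) (htop : Tendsto F atTop (nhds 1)) (x : ℝ) :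
    0 ≤ F x ∧ F x ≤ 1 :=
  ⟨hm.le_of_tendsto hbot x, hm.ge_of_tendsto htop x⟩

lemma fgm_integral_deriv_eq (G g : ℝ → ℝ) (hg : ∀ y, HasDerivAt G (g y) y)
    (hint : Integrable g) (a b : ℝ)
    (hbot : Tendsto G atBot (nhds a)) (htop : Tendsto G atTop (nhds b)) :
    ∫ x, g x = b - a := by
  have h1 : Tendsto (fun n : ℕ => ∫ x in (-(n:ℝ))..(n:ℝ), g x) atTop (nhds (∫ x, g x)) :=
    intervalIntegral_tendsto_integral hint
      (tendsto_neg_atBot_iff.mpr tendsto_natCast_atTop_atTop) tendsto_natCast_atTop_atTop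
  have h2 : ∀ n : ℕ, (∫ x in (-(n:ℝ))..(n:ℝ), g x) = G n - G (-(n:ℝ)) := fun n =>
    intervalIntegral.integral_eq_sub_of_hasDerivAt (fun x _ => hg x)
      hint.intervalIntegrable
  have h3 : Tendsto (fun n : ℕ => G (n:ℝ) - G (-(n:ℝ))) atTop (nhds (b - a)) :=
    (htop.comp tendsto_natCast_atTop_atTop).sub
      (hbot.comp (tendsto_neg_atBot_iff.mpr tendsto_natCast_atTop_atTop))
  exact tendsto_nhds_unique (by simpa only [h2] using h1) h3

lemma fgm_integrable_deriv_cdf {F : ℝ → ℝ} (hF : ContDiff ℝ 1 F) (hm : Monotone F)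
    (hbot : Tendsto F atBot (nhds 0)) (htop : Tendsto F atTop (nhds 1)) :
    Integrable (deriv F) := by
  have hc : Continuous (deriv F) := hF.continuous_deriv le_rfl
  have h0 : ∀ x, 0 ≤ deriv F x := mono_deriv_nonneg (hF.differentiable one_ne_zero) hm
  refine integrable_of_intervalIntegral_norm_bounded (l := atTop)
    (a := fun n : ℕ => -(n:ℝ)) (b := fun n : ℕ => (n:ℝ)) 1
    (fun n => hc.integrableOn_Ioc)
    (tendsto_neg_atBot_iff.mpr tendsto_natCast_atTop_atTop) tendsto_natCast_atTop_atTop ?_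
  filter_upwards with n
  have : (∫ x in (-(n:ℝ))..(n:ℝ), ‖deriv F x‖) = ∫ x in (-(n:ℝ))..(n:ℝ), deriv F x := by
    congr 1; funext x; exact Real.norm_of_nonneg (h0 x)
  rw [this, intervalIntegral.integral_deriv_eq_sub
    (fun x _ => (hF.differentiable one_ne_zero) x) (hc.intervalIntegrable _ _)]
  have h1 := mono_cdf_mem hm hbot htop (n:ℝ)
  have h2 := mono_cdf_mem hm hbot htop (-(n:ℝ))
  linarith [h1.2, h2.1]

end FgmHelpers

/-- The bivariate measure obtained by coupling the margins `F₁, F₂` (with densities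
`F₁', F₂'`) by the Farlie–Gumbel–Morgenstern copula with parameter `θ`: its joint
density is `F₁'(x₁)F₂'(x₂)(1 + θ(1-2F₁(x₁))(1-2F₂(x₂)))`. -/
noncomputable def fgmMargins (F₁ F₂ : ℝ → ℝ) (θ : ℝ) : Measure (ℝ × ℝ) :=
  (volume : Measure (ℝ × ℝ)).withDensity fun p =>
    ENNReal.ofReal (deriv F₁ p.1 * deriv F₂ p.2 *
      (1 + θ * (1 - 2 * F₁ p.1) * (1 - 2 * F₂ p.2)))

/-- Conditional expectation formula for the Farlie–Gumbel–Morgenstern coupling of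
general continuously differentiable margins `F₁, F₂`:
`E[x₂ ∣ x₁] = E[x₂] + θ(1 - 2F₁(x₁)) ∫ y(1 - 2F₂(y))F₂'(y) dy` almost surely. -/
theorem fgm_general_margins_condexp (F₁ F₂ : ℝ → ℝ) (θ : ℝ)
    (hθ₁ : -1 ≤ θ) (hθ₂ : θ ≤ 1)
    (hF₁ : ContDiff ℝ 1 F₁) (hF₂ : ContDiff ℝ 1 F₂)
    (hF₁mono : Monotone F₁) (hF₂mono : Monotone F₂)
    (hF₁bot : Tendsto F₁ atBot (nhds 0)) (hF₁top : Tendsto F₁ atTop (nhds 1))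
    (hF₂bot : Tendsto F₂ atBot (nhds 0)) (hF₂top : Tendsto F₂ atTop (nhds 1))
    (hint : Integrable (fun p => p.2) (fgmMargins F₁ F₂ θ))
    (hint2 : Integrable (fun y => y * (1 - 2 * F₂ y) * deriv F₂ y) volume) :
    (fgmMargins F₁ F₂ θ)[Prod.snd | MeasurableSpace.comap Prod.fst Real.measurableSpace]
      =ᵐ[fgmMargins F₁ F₂ θ] fun p =>
        (∫ q, q.2 ∂(fgmMargins F₁ F₂ θ))
          + θ * (1 - 2 * F₁ p.1) * ∫ y, y * (1 - 2 * F₂ y) * deriv F₂ y := by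
  classical
  have hd₁ : Differentiable ℝ F₁ := hF₁.differentiable one_ne_zero
  have hd₂ : Differentiable ℝ F₂ := hF₂.differentiable one_ne_zero
  have hc₁ : Continuous (deriv F₁) := hF₁.continuous_deriv le_rfl
  have hc₂ : Continuous (deriv F₂) := hF₂.continuous_deriv le_rfl
  have h₁0 : ∀ x, 0 ≤ deriv F₁ x := mono_deriv_nonneg hd₁ hF₁mono
  have h₂0 : ∀ x, 0 ≤ deriv F₂ x := mono_deriv_nonneg hd₂ hF₂mono
  have hF₁m := mono_cdf_mem hF₁mono hF₁bot hF₁top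
  have hF₂m := mono_cdf_mem hF₂mono hF₂bot hF₂top
  have hu₁ : ∀ x, |1 - 2 * F₁ x| ≤ 1 := fun x =>
    abs_le.mpr ⟨by linarith [(hF₁m x).2], by linarith [(hF₁m x).1]⟩
  have hu₂ : ∀ y, |1 - 2 * F₂ y| ≤ 1 := fun y =>
    abs_le.mpr ⟨by linarith [(hF₂m y).2], by linarith [(hF₂m y).1]⟩
  have hθabs : |θ| ≤ 1 := abs_le.mpr ⟨hθ₁, hθ₂⟩
  have hint_f₁ : Integrable (deriv F₁) := fgm_integrable_deriv_cdf hF₁ hF₁mono hF₁bot hF₁top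
  have hint_f₂ : Integrable (deriv F₂) := fgm_integrable_deriv_cdf hF₂ hF₂mono hF₂bot hF₂top
  have hI_f₁ : (∫ x, deriv F₁ x) = 1 := by
    simpa using fgm_integral_deriv_eq F₁ _ (fun y => (hd₁ y).hasDerivAt) hint_f₁ 0 1 hF₁bot hF₁top
  have hI_f₂ : (∫ y, deriv F₂ y) = 1 := by
    simpa using fgm_integral_deriv_eq F₂ _ (fun y => (hd₂ y).hasDerivAt) hint_f₂ 0 1 hF₂bot hF₂top
  have huder₁ : ∀ x, HasDerivAt (fun x => F₁ x - F₁ x ^ 2) ((1 - 2 * F₁ x) * deriv F₁ x) x := by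
    intro x
    have h := (hd₁ x).hasDerivAt
    have h2 := h.sub (h.pow 2)
    refine h2.congr_deriv ?_
    simp; ring
  have huder₂ : ∀ y, HasDerivAt (fun y => F₂ y - F₂ y ^ 2) ((1 - 2 * F₂ y) * deriv F₂ y) y := by
    intro y
    have h := (hd₂ y).hasDerivAt
    have h2 := h.sub (h.pow 2)
    refine h2.congr_deriv ?_
    simp; ring
  have hcu₁ : Continuous fun x => (1 - 2 * F₁ x) * deriv F₁ x :=
    (continuous_const.sub (continuous_const.mul hd₁.continuous)).mul hc₁
  have hcu₂ : Continuous fun y => (1 - 2 * F₂ y) * deriv F₂ y :=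
    (continuous_const.sub (continuous_const.mul hd₂.continuous)).mul hc₂
  have hint_u₁ : Integrable (fun x => (1 - 2 * F₁ x) * deriv F₁ x) := by
    refine hint_f₁.mono' hcu₁.aestronglyMeasurable (ae_of_all _ fun x => ?_)
    rw [Real.norm_eq_abs, abs_mul, abs_of_nonneg (h₁0 x)]
    nlinarith [hu₁ x, h₁0 x, abs_nonneg (1 - 2 * F₁ x)]
  have hint_u₂ : Integrable (fun y => (1 - 2 * F₂ y) * deriv F₂ y) := by
    refine hint_f₂.mono' hcu₂.aestronglyMeasurable (ae_of_all _ fun y => ?_)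
    rw [Real.norm_eq_abs, abs_mul, abs_of_nonneg (h₂0 y)]
    nlinarith [hu₂ y, h₂0 y, abs_nonneg (1 - 2 * F₂ y)]
  have hI_u₁ : (∫ x, (1 - 2 * F₁ x) * deriv F₁ x) = 0 := by
    have := fgm_integral_deriv_eq (fun x => F₁ x - F₁ x ^ 2) _ huder₁ hint_u₁ 0 0
      (by simpa using hF₁bot.sub (hF₁bot.pow 2)) (by simpa using hF₁top.sub (hF₁top.pow 2))
    simpa using this
  have hI_u₂ : (∫ y, (1 - 2 * F₂ y) * deriv F₂ y) = 0 := by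
    have := fgm_integral_deriv_eq (fun y => F₂ y - F₂ y ^ 2) _ huder₂ hint_u₂ 0 0
      (by simpa using hF₂bot.sub (hF₂bot.pow 2)) (by simpa using hF₂top.sub (hF₂top.pow 2))
    simpa using this
  set ρ : ℝ × ℝ → ℝ := fun p => deriv F₁ p.1 * deriv F₂ p.2 *
    (1 + θ * (1 - 2 * F₁ p.1) * (1 - 2 * F₂ p.2)) with hρdef
  have habs : ∀ p : ℝ × ℝ, |θ * (1 - 2 * F₁ p.1) * (1 - 2 * F₂ p.2)| ≤ 1 := by
    intro p
    rw [abs_mul, abs_mul]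
    have h1 := hu₁ p.1; have h2 := hu₂ p.2
    exact mul_le_one₀ (mul_le_one₀ hθabs (abs_nonneg _) h1) (abs_nonneg _) h2
  have hρ0 : ∀ p, 0 ≤ ρ p := by
    intro p
    have h1 := neg_abs_le (θ * (1 - 2 * F₁ p.1) * (1 - 2 * F₂ p.2))
    have h2 := habs p
    exact mul_nonneg (mul_nonneg (h₁0 _) (h₂0 _)) (by linarith)
  have hρc : Continuous ρ :=
    ((hc₁.comp continuous_fst).mul (hc₂.comp continuous_snd)).mul
      (continuous_const.add ((continuous_const.mul
        (continuous_const.sub (continuous_const.mul (hd₁.continuous.comp continuous_fst)))).mul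
        (continuous_const.sub (continuous_const.mul (hd₂.continuous.comp continuous_snd)))))
  have hμeq : fgmMargins F₁ F₂ θ
      = (volume : Measure (ℝ × ℝ)).withDensity (fun p => ENNReal.ofReal (ρ p)) := rfl
  have hmeasNN : Measurable fun p => (ρ p).toNNReal := hρc.measurable.real_toNNReal
  have hsmul_eq : ∀ h : ℝ × ℝ → ℝ, (fun p => (ρ p).toNNReal • h p) = fun p => ρ p * h p := by
    intro h
    funext p
    simp [NNReal.smul_def, Real.coe_toNNReal _ (hρ0 p)]
  have hconvInt : ∀ (ν : Measure (ℝ × ℝ)) (h : ℝ × ℝ → ℝ),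
      Integrable h (ν.withDensity fun p => ENNReal.ofReal (ρ p))
        ↔ Integrable (fun p => ρ p * h p) ν := by
    intro ν h
    have hiff := integrable_withDensity_iff_integrable_smul (μ := ν) hmeasNN (g := h)
    rw [hsmul_eq] at hiff
    exact hiff
  have hconv : ∀ (ν : Measure (ℝ × ℝ)) (h : ℝ × ℝ → ℝ),
      (∫ p, h p ∂(ν.withDensity fun p => ENNReal.ofReal (ρ p))) = ∫ p, ρ p * h p ∂ν := by
    intro ν h
    have h1 := integral_withDensity_eq_integral_smul (μ := ν) hmeasNN h
    rw [hsmul_eq] at h1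
    exact h1
  have hprodmeas : (volume : Measure (ℝ × ℝ)) = (volume : Measure ℝ).prod volume :=
    rfl
  have hρint : Integrable ρ (volume : Measure (ℝ × ℝ)) := by
    rw [hprodmeas]
    refine ((hint_f₁.mul_prod hint_f₂).const_mul 2).mono' hρc.aestronglyMeasurable
      (ae_of_all _ fun p => ?_)
    rw [Real.norm_of_nonneg (hρ0 p)]
    have h1 := abs_le.mp (habs p)
    have h2 := mul_nonneg (h₁0 p.1) (h₂0 p.2)
    simp only [hρdef]
    nlinarith [h1.2]
  haveI hfin : IsFiniteMeasure (fgmMargins F₁ F₂ θ) := by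
    constructor
    rw [hμeq, withDensity_apply _ MeasurableSet.univ, Measure.restrict_univ]
    exact (hasFiniteIntegral_iff_ofReal (ae_of_all _ hρ0)).mp hρint.hasFiniteIntegral
  -- integrability of ρ · snd on the product
  have hintV : Integrable (fun p : ℝ × ℝ => ρ p * p.2) (volume : Measure (ℝ × ℝ)) := by
    rw [← hconvInt volume (fun p => p.2)]
    exact hint
  have hint' : Integrable (fun p : ℝ × ℝ => ρ p * p.2) ((volume : Measure ℝ).prod volume) := by
    rw [← hprodmeas]; exact hintV
  -- integrability of y ↦ y * f₂ y
  have hm_int : Integrable (fun y => y * deriv F₂ y) volume := by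
    refine hint'.integral_prod_right.congr (ae_of_all _ fun y => ?_)
    show (∫ x, ρ (x, y) * y) = y * deriv F₂ y
    have heq : (fun x => ρ (x, y) * y)
        = fun x => (y * deriv F₂ y) * deriv F₁ x
          + (θ * (y * (1 - 2 * F₂ y) * deriv F₂ y)) * ((1 - 2 * F₁ x) * deriv F₁ x) := by
      funext x; simp only [hρdef]; ring
    rw [heq, integral_add (hint_f₁.const_mul _) (hint_u₁.const_mul _),
      integral_const_mul, integral_const_mul, hI_f₁, hI_u₁]
    ring
  -- inner integrals
  have hinner0 : ∀ x, (∫ y, ρ (x, y)) = deriv F₁ x := by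
    intro x
    have heq : (fun y => ρ (x, y))
        = fun y => (deriv F₁ x) * deriv F₂ y
          + (deriv F₁ x * θ * (1 - 2 * F₁ x)) * ((1 - 2 * F₂ y) * deriv F₂ y) := by
      funext y; simp only [hρdef]; ring
    rw [heq, integral_add (hint_f₂.const_mul _) (hint_u₂.const_mul _),
      integral_const_mul, integral_const_mul, hI_f₂, hI_u₂]
    ring
  have hinner1 : ∀ x, (∫ y, ρ (x, y) * y)
      = deriv F₁ x * ((∫ y, y * deriv F₂ y)
        + θ * (1 - 2 * F₁ x) * (∫ y, y * (1 - 2 * F₂ y) * deriv F₂ y)) := by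
    intro x
    have heq : (fun y => ρ (x, y) * y)
        = fun y => (deriv F₁ x) * (y * deriv F₂ y)
          + (deriv F₁ x * θ * (1 - 2 * F₁ x)) * (y * (1 - 2 * F₂ y) * deriv F₂ y) := by
      funext y; simp only [hρdef]; ring
    rw [heq, integral_add (hm_int.const_mul _) (hint2.const_mul _),
      integral_const_mul, integral_const_mul]
    ring
  -- value of the mean
  have hc_eq : (∫ q, q.2 ∂(fgmMargins F₁ F₂ θ)) = ∫ y, y * deriv F₂ y := by
    rw [hμeq, hconv volume (fun p => p.2), hprodmeas, integral_prod _ hint']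
    show (∫ x, ∫ y, ρ (x, y) * y) = _
    have heq : (fun x => ∫ y, ρ (x, y) * y)
        = fun x => (∫ y, y * deriv F₂ y) * deriv F₁ x
          + (θ * (∫ y, y * (1 - 2 * F₂ y) * deriv F₂ y)) * ((1 - 2 * F₁ x) * deriv F₁ x) := by
      funext x; rw [hinner1 x]; ring
    rw [heq, integral_add (hint_f₁.const_mul _) (hint_u₁.const_mul _),
      integral_const_mul, integral_const_mul, hI_f₁, hI_u₁]
    ring
  -- condexp machinery
  have hm_le : MeasurableSpace.comap Prod.fst Real.measurableSpace
      ≤ (inferInstance : MeasurableSpace (ℝ × ℝ)) := measurable_fst.comap_le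
  haveI : IsFiniteMeasure ((fgmMargins F₁ F₂ θ).trim hm_le) := by
    constructor
    rw [trim_measurableSet_eq hm_le MeasurableSet.univ]
    exact measure_lt_top _ _
  set c : ℝ := ∫ q, q.2 ∂(fgmMargins F₁ F₂ θ) with hcdef
  set Iv : ℝ := ∫ y, y * (1 - 2 * F₂ y) * deriv F₂ y with hIvdef
  set g : ℝ × ℝ → ℝ := fun p => c + θ * (1 - 2 * F₁ p.1) * Iv with hgdef
  have hφc : Continuous fun x : ℝ => c + θ * (1 - 2 * F₁ x) * Iv :=
    continuous_const.add ((continuous_const.mul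
      (continuous_const.sub (continuous_const.mul hd₁.continuous))).mul continuous_const)
  have hgm : AEStronglyMeasurable[MeasurableSpace.comap Prod.fst Real.measurableSpace]
      g (fgmMargins F₁ F₂ θ) := by
    refine ⟨g, ?_, EventuallyEq.rfl⟩
    have hfstm : Measurable[MeasurableSpace.comap Prod.fst Real.measurableSpace]
        (Prod.fst : ℝ × ℝ → ℝ) := Measurable.of_comap_le le_rfl
    exact (hφc.measurable.comp hfstm).stronglyMeasurable
  have hgbd : ∀ p : ℝ × ℝ, ‖g p‖ ≤ |c| + |θ| * |Iv| := by
    intro p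
    rw [Real.norm_eq_abs, hgdef]
    calc |c + θ * (1 - 2 * F₁ p.1) * Iv| ≤ |c| + |θ * (1 - 2 * F₁ p.1) * Iv| := abs_add_le _ _
      _ ≤ |c| + |θ| * |Iv| := by
          rw [abs_mul, abs_mul]
          have h5 : |θ| * |1 - 2 * F₁ p.1| * |Iv| ≤ |θ| * 1 * |Iv| := by
            gcongr
            exact hu₁ p.1
          linarith [h5]
  have hgint : Integrable g (fgmMargins F₁ F₂ θ) :=
    (integrable_const (|c| + |θ| * |Iv|)).mono'
      ((hφc.comp continuous_fst).aestronglyMeasurable) (ae_of_all _ hgbd)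
  have hg_eq : ∀ s : Set (ℝ × ℝ),
      MeasurableSet[MeasurableSpace.comap Prod.fst Real.measurableSpace] s →
      (fgmMargins F₁ F₂ θ) s < ⊤ →
      ∫ x in s, g x ∂(fgmMargins F₁ F₂ θ) = ∫ x in s, Prod.snd x ∂(fgmMargins F₁ F₂ θ) := by
    rintro s ⟨A, hA, rfl⟩ -
    rw [← Set.prod_univ]
    have hres : (fgmMargins F₁ F₂ θ).restrict (A ×ˢ Set.univ)
        = ((volume : Measure (ℝ × ℝ)).restrict (A ×ˢ Set.univ)).withDensity
          (fun p => ENNReal.ofReal (ρ p)) := by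
      rw [hμeq, restrict_withDensity (hA.prod MeasurableSet.univ)]
    have hres2 : (volume : Measure (ℝ × ℝ)).restrict (A ×ˢ Set.univ)
        = ((volume : Measure ℝ).restrict A).prod volume := by
      rw [hprodmeas, ← Measure.prod_restrict, Measure.restrict_univ]
    have hint_snd_r : Integrable (fun p : ℝ × ℝ => ρ p * p.2)
        (((volume : Measure ℝ).restrict A).prod volume) := by
      rw [← hres2]; exact hintV.restrict
    have hgglob : Integrable (fun p : ℝ × ℝ => ρ p * g p) (volume : Measure (ℝ × ℝ)) := by
      refine (hρint.const_mul (|c| + |θ| * |Iv|)).mono'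
        ((hρc.mul (hφc.comp continuous_fst)).aestronglyMeasurable) (ae_of_all _ fun p => ?_)
      rw [Real.norm_eq_abs, abs_mul, abs_of_nonneg (hρ0 p)]
      have h1 := hgbd p
      rw [Real.norm_eq_abs] at h1
      have h2 := hρ0 p
      have h3 : (0:ℝ) ≤ |c| + |θ| * |Iv| :=
        add_nonneg (abs_nonneg _) (mul_nonneg (abs_nonneg _) (abs_nonneg _))
      calc ρ p * |g p| ≤ ρ p * (|c| + |θ| * |Iv|) := by nlinarith
        _ = (|c| + |θ| * |Iv|) * ρ p := by ring
    have hint_g_r : Integrable (fun p : ℝ × ℝ => ρ p * g p)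
        (((volume : Measure ℝ).restrict A).prod volume) := by
      rw [← hres2]; exact hgglob.restrict
    have lhs : ∫ x in A ×ˢ Set.univ, g x ∂(fgmMargins F₁ F₂ θ)
        = ∫ x in A, deriv F₁ x * (c + θ * (1 - 2 * F₁ x) * Iv) := by
      rw [hres, hconv _ g, hres2, integral_prod _ hint_g_r]
      refine integral_congr_ae (ae_of_all _ fun x => ?_)
      show (∫ y, ρ (x, y) * g (x, y)) = _
      have heq : (fun y => ρ (x, y) * g (x, y))
          = fun y => ρ (x, y) * (c + θ * (1 - 2 * F₁ x) * Iv) := by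
        funext y; simp only [hgdef]
      rw [heq, integral_mul_const, hinner0 x]
    have rhs : ∫ x in A ×ˢ Set.univ, Prod.snd x ∂(fgmMargins F₁ F₂ θ)
        = ∫ x in A, deriv F₁ x * ((∫ y, y * deriv F₂ y) + θ * (1 - 2 * F₁ x) * Iv) := by
      rw [hres, hconv _ Prod.snd, hres2, integral_prod _ hint_snd_r]
      refine integral_congr_ae (ae_of_all _ fun x => ?_)
      show (∫ y, ρ (x, y) * y) = _
      exact hinner1 x
    rw [lhs, rhs, hc_eq]
  refine (ae_eq_condExp_of_forall_setIntegral_eq hm_le hint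
    (fun s _ _ => hgint.integrableOn) hg_eq hgm).symm
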